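/- For every K > 0 there exists L = L(K) > 0 with the following property. Let N ≥ n, let A = (a_{ij}) be an N×n random matrix with i.i.d. symmetrically distributed entries of unit variance, and for y ∈ S^{n-1} define the random set I_y = {i ≤ N : Σ_{j=1}^n a_{ij}² y_j² ≤ 2}. Then for every fixed y ∈ S^{n-1}, P(‖P_{I_y} A y‖ ≥ L√N) ≤ exp(−KN). -/

import Mathlib

open MeasureTheory ProbabilityTheory Finset

set_option maxHeartbeats 1000000

noncomputable section PMVBAux

open Real

def pmvbSgn (b : Bool) : ℝ := if b then 1 else -1

lemma pmvbSgn_sq (b : Bool) : pmvbSgn b ^ 2 = 1 := by cases b <;> norm_num [pmvbSgn]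

lemma exp_add_exp_neg_le (x : ℝ) : exp x + exp (-x) ≤ 2 * exp (x ^ 2 / 2) := by
  have h := Real.cosh_le_exp_half_sq x
  rw [Real.cosh_eq] at h
  linarith

lemma gauss_rw (a : ℝ) : (fun u : ℝ => exp (a * u - u ^ 2 / 2))
    = fun u => exp (a ^ 2 / 2) * exp (-(1/2 : ℝ) * (u - a) ^ 2) := by
  funext u; rw [← Real.exp_add]; congr 1; ring

lemma gauss_integrable (a : ℝ) : Integrable (fun u : ℝ => exp (a * u - u ^ 2 / 2)) := by
  rw [gauss_rw]
  exact ((integrable_exp_neg_mul_sq (by norm_num)).comp_sub_right a).const_mul _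

lemma gauss_integral (a : ℝ) :
    ∫ u : ℝ, exp (a * u - u ^ 2 / 2) = exp (a ^ 2 / 2) * Real.sqrt (2 * π) := by
  rw [gauss_rw, MeasureTheory.integral_const_mul]
  congr 1
  rw [show (fun u : ℝ => exp (-(1/2 : ℝ) * (u - a) ^ 2)) = fun u => (fun v : ℝ => exp (-(1/2 : ℝ) * v ^ 2)) (u - a) from rfl]
  rw [MeasureTheory.integral_sub_right_eq_self (fun v : ℝ => exp (-(1/2 : ℝ) * v ^ 2)) a]
  rw [integral_gaussian]
  congr 1
  rw [div_div_eq_mul_div]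
  norm_num [mul_comm]

lemma exp_sq_div_eight (x : ℝ) :
    exp (x ^ 2 / 8) = (Real.sqrt (2 * π))⁻¹ * ∫ u : ℝ, exp (x / 2 * u - u ^ 2 / 2) := by
  rw [gauss_integral]
  have h2 : (x / 2) ^ 2 / 2 = x ^ 2 / 8 := by ring
  have hs : Real.sqrt (2 * π) ≠ 0 := by
    positivity
  rw [h2]
  field_simp

lemma sum_bool_prod {n : ℕ} (h : Fin n → Bool → ℝ) :
    ∑ e : Fin n → Bool, ∏ j, h j (e j) = ∏ j, (h j true + h j false) := by
  classical
  rw [← Fintype.piFinset_univ, Finset.sum_prod_piFinset]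
  refine Finset.prod_congr rfl fun j _ => ?_
  simp [Fintype.sum_bool]

lemma row_bound {n : ℕ} (c : Fin n → ℝ) (hc : ∑ j, (c j) ^ 2 ≤ 2) :
    ∑ e : Fin n → Bool, exp ((∑ j, pmvbSgn (e j) * c j) ^ 2 / 8)
      ≤ 2 ^ n * Real.sqrt 2 := by
  classical
  have key : ∀ u : ℝ, ∑ e : Fin n → Bool,
      exp ((∑ j, pmvbSgn (e j) * c j) / 2 * u - u ^ 2 / 2)
      ≤ (2 : ℝ) ^ n * exp (-(1/4 : ℝ) * u ^ 2) := by
    intro u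
    have hrw : ∀ e : Fin n → Bool,
        exp ((∑ j, pmvbSgn (e j) * c j) / 2 * u - u ^ 2 / 2)
        = exp (-(u ^ 2 / 2)) * ∏ j, exp (pmvbSgn (e j) * (c j * (u / 2))) := by
      intro e
      rw [← Real.exp_sum, ← Real.exp_add]
      congr 1
      rw [Finset.sum_div, Finset.sum_mul]
      rw [show (∑ j, pmvbSgn (e j) * (c j * (u/2))) = ∑ j, pmvbSgn (e j) * c j / 2 * u from
        Finset.sum_congr rfl fun j _ => by ring]
      ring
    simp only [hrw]
    rw [← Finset.mul_sum]
    have hgrp : ∑ e : Fin n → Bool, ∏ j, exp (pmvbSgn (e j) * (c j * (u / 2)))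
        = ∏ j, (exp (c j * (u / 2)) + exp (-(c j * (u / 2)))) := by
      rw [sum_bool_prod (fun j b => exp (pmvbSgn b * (c j * (u / 2))))]
      refine Finset.prod_congr rfl fun j _ => by norm_num [pmvbSgn]
    rw [hgrp]
    have hprod : ∏ j, (exp (c j * (u / 2)) + exp (-(c j * (u / 2))))
        ≤ ∏ j : Fin n, 2 * exp ((c j * (u / 2)) ^ 2 / 2) :=
      Finset.prod_le_prod (fun j _ => by positivity) (fun j _ => exp_add_exp_neg_le _)
    have hprod2 : ∏ j : Fin n, 2 * exp ((c j * (u / 2)) ^ 2 / 2)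
        = 2 ^ n * exp (∑ j, (c j * (u / 2)) ^ 2 / 2) := by
      rw [Finset.prod_mul_distrib, Finset.prod_const, Real.exp_sum, Finset.card_univ,
        Fintype.card_fin]
    have hsum : ∑ j, (c j * (u / 2)) ^ 2 / 2 ≤ u ^ 2 / 4 := by
      have : ∑ j, (c j * (u / 2)) ^ 2 / 2 = (u ^ 2 / 8) * ∑ j, (c j) ^ 2 := by
        rw [Finset.mul_sum]; exact Finset.sum_congr rfl fun j _ => by ring
      rw [this]
      nlinarith [sq_nonneg u]
    calc exp (-(u ^ 2 / 2)) * ∏ j, (exp (c j * (u / 2)) + exp (-(c j * (u / 2))))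
        ≤ exp (-(u ^ 2 / 2)) * (2 ^ n * exp (u ^ 2 / 4)) := by
          refine mul_le_mul_of_nonneg_left ?_ (Real.exp_nonneg _)
          exact hprod.trans (hprod2.le.trans
            (mul_le_mul_of_nonneg_left (Real.exp_le_exp.2 hsum) (by positivity)))
      _ = 2 ^ n * exp (-(1/4 : ℝ) * u ^ 2) := by
          rw [mul_left_comm, ← Real.exp_add]
          congr 1
          ring
  have hw : (0:ℝ) ≤ (Real.sqrt (2 * π))⁻¹ := by positivity
  calc ∑ e : Fin n → Bool, exp ((∑ j, pmvbSgn (e j) * c j) ^ 2 / 8)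
      = ∑ e : Fin n → Bool, (Real.sqrt (2 * π))⁻¹ *
          ∫ u : ℝ, exp ((∑ j, pmvbSgn (e j) * c j) / 2 * u - u ^ 2 / 2) :=
        Finset.sum_congr rfl fun e _ => exp_sq_div_eight _
    _ = (Real.sqrt (2 * π))⁻¹ * ∫ u : ℝ, ∑ e : Fin n → Bool,
          exp ((∑ j, pmvbSgn (e j) * c j) / 2 * u - u ^ 2 / 2) := by
        rw [← Finset.mul_sum, MeasureTheory.integral_finset_sum _
          (fun e _ => gauss_integrable _)]
    _ ≤ (Real.sqrt (2 * π))⁻¹ * ∫ u : ℝ, (2:ℝ) ^ n * exp (-(1/4 : ℝ) * u ^ 2) := by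
        refine mul_le_mul_of_nonneg_left ?_ hw
        exact MeasureTheory.integral_mono
          (MeasureTheory.integrable_finset_sum _ (fun e _ => gauss_integrable _))
          ((integrable_exp_neg_mul_sq (by norm_num)).const_mul _) key
    _ = 2 ^ n * Real.sqrt 2 := by
        rw [MeasureTheory.integral_const_mul, integral_gaussian]
        rw [show π / (1/4:ℝ) = 4 * π by ring]
        rw [Real.sqrt_mul (by norm_num : (0:ℝ) ≤ 4), Real.sqrt_mul (by norm_num : (0:ℝ) ≤ 2),
          show Real.sqrt 4 = 2 by rw [show (4:ℝ) = 2^2 by norm_num, Real.sqrt_sq (by norm_num)]]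
        have hπ : 0 < Real.sqrt π := Real.sqrt_pos.2 pi_pos
        have h2 : Real.sqrt 2 * Real.sqrt 2 = 2 := Real.mul_self_sqrt (by norm_num)
        have h2sq : Real.sqrt 2 ^ 2 = 2 := Real.sq_sqrt (by norm_num)
        field_simp
        linear_combination (-1 : ℝ) * h2sq
lemma matrix_bound {N n : ℕ} (y : Fin n → ℝ) (c : Fin N × Fin n → ℝ) :
    ∑ ε : Fin N × Fin n → Bool,
      Real.exp ((∑ i ∈ Finset.univ.filter
          (fun i : Fin N => ∑ j, (c (i, j)) ^ 2 * (y j) ^ 2 ≤ 2),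
        (∑ j, pmvbSgn (ε (i, j)) * c (i, j) * y j) ^ 2) / 8)
      ≤ 2 ^ (N * n) * Real.sqrt 2 ^ N := by
  classical
  have hone : (1:ℝ) ≤ Real.sqrt 2 := by
    rw [show (1:ℝ) = Real.sqrt 1 by simp]
    exact Real.sqrt_le_sqrt (by norm_num)
  set g : Fin N → (Fin n → Bool) → ℝ := fun i v =>
    if (∑ j, (c (i, j)) ^ 2 * (y j) ^ 2 ≤ 2) then
      exp ((∑ j, pmvbSgn (v j) * c (i, j) * y j) ^ 2 / 8) else 1 with hg
  have step1 : ∀ ε : Fin N × Fin n → Bool,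
      Real.exp ((∑ i ∈ Finset.univ.filter
          (fun i : Fin N => ∑ j, (c (i, j)) ^ 2 * (y j) ^ 2 ≤ 2),
        (∑ j, pmvbSgn (ε (i, j)) * c (i, j) * y j) ^ 2) / 8)
      = ∏ i : Fin N, g i (fun j => ε (i, j)) := by
    intro ε
    rw [Finset.sum_div, Real.exp_sum, Finset.prod_filter]
  simp only [step1]
  have step2 : ∑ ε : Fin N × Fin n → Bool, ∏ i : Fin N, g i (fun j => ε (i, j))
      = ∑ f : Fin N → Fin n → Bool, ∏ i : Fin N, g i (f i) :=
    Fintype.sum_equiv (Equiv.curry (Fin N) (Fin n) Bool) _ _ (fun ε => rfl)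
  rw [step2]
  rw [← Fintype.piFinset_univ, Finset.sum_prod_piFinset]
  have step3 : ∀ i : Fin N, ∑ v ∈ (Finset.univ : Finset (Fin n → Bool)), g i v
      ≤ 2 ^ n * Real.sqrt 2 := by
    intro i
    by_cases h : (∑ j, (c (i, j)) ^ 2 * (y j) ^ 2 ≤ 2)
    · simp only [hg, if_pos h]
      have hc' : ∑ j, (c (i, j) * y j) ^ 2 ≤ 2 := by
        refine le_trans (le_of_eq ?_) h
        exact Finset.sum_congr rfl fun j _ => by ring
      have := row_bound (fun j => c (i, j) * y j) hc'
      refine le_trans (le_of_eq ?_) this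
      refine Finset.sum_congr rfl fun v _ => ?_
      congr 1
      rw [div_left_inj']
      · congr 1
        exact Finset.sum_congr rfl fun j _ => by ring
      · norm_num
    · simp only [hg, if_neg h]
      rw [Finset.sum_const, Finset.card_univ]
      simp only [Fintype.card_fun, Fintype.card_bool, Fintype.card_fin, nsmul_eq_mul, mul_one]
      push_cast
      nlinarith [hone, pow_pos (show (0:ℝ) < 2 by norm_num) n]
  calc ∏ i : Fin N, ∑ v ∈ (Finset.univ : Finset (Fin n → Bool)), g i v
      ≤ ∏ _i : Fin N, (2 ^ n * Real.sqrt 2) := by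
        refine Finset.prod_le_prod (fun i _ => ?_) (fun i _ => step3 i)
        refine Finset.sum_nonneg fun v _ => ?_
        simp only [hg]
        split
        · positivity
        · norm_num
    _ = 2 ^ (N * n) * Real.sqrt 2 ^ N := by
        rw [Finset.prod_const, Finset.card_univ, Fintype.card_fin, mul_pow, ← pow_mul,
          mul_comm n N]
lemma map_pi_of_iIndep {ι : Type*} [Fintype ι] {Ω : Type} [MeasureSpace Ω]
    [IsProbabilityMeasure (ℙ : Measure Ω)]
    (g : ι → Ω → ℝ) (hg : ∀ p, Measurable (g p))
    (hindep : iIndepFun g ℙ) :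
    Measure.map (fun ω p => g p ω) ℙ = Measure.pi (fun p => Measure.map (g p) ℙ) := by
  haveI : ∀ p, IsProbabilityMeasure (Measure.map (g p) ℙ) :=
    fun p => Measure.isProbabilityMeasure_map (hg p).aemeasurable
  refine (Measure.pi_eq fun s hs => ?_).symm
  rw [Measure.map_apply (measurable_pi_lambda _ fun p => hg p) (MeasurableSet.univ_pi hs)]
  have hpre : (fun ω p => g p ω) ⁻¹' Set.pi Set.univ s = ⋂ p ∈ Finset.univ, g p ⁻¹' s p := by
    ext ω; simp [Set.mem_pi]
  rw [hpre, hindep.measure_inter_preimage_eq_mul Finset.univ (fun i _ => hs i)]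
  exact Finset.prod_congr rfl fun p _ => (Measure.map_apply (hg p) (hs p)).symm

lemma symmetrize_lintegral {N n : ℕ} {Ω : Type} [MeasureSpace Ω]
    [IsProbabilityMeasure (ℙ : Measure Ω)]
    (a : Fin N × Fin n → Ω → ℝ) (ha : ∀ p, Measurable (a p))
    (hindep : iIndepFun a ℙ)
    (hasymm : ∀ p, IdentDistrib (a p) (fun ω => -(a p ω)) ℙ ℙ)
    (F : (Fin N × Fin n → ℝ) → ENNReal) (hF : Measurable F) (ε : Fin N × Fin n → Bool) :
    ∫⁻ ω, F (fun p => pmvbSgn (ε p) * a p ω) ∂ℙ = ∫⁻ ω, F (fun p => a p ω) ∂ℙ := by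
  set b : Fin N × Fin n → Ω → ℝ := fun p ω => pmvbSgn (ε p) * a p ω with hb
  have hbm : ∀ p, Measurable (b p) := fun p => (ha p).const_mul _
  have hbindep : iIndepFun b ℙ :=
    hindep.comp (fun p x => pmvbSgn (ε p) * x) (fun p => measurable_const_mul _)
  have hbmap : ∀ p, Measure.map (b p) ℙ = Measure.map (a p) ℙ := by
    intro p
    cases hε : ε p
    · have : b p = fun ω => -(a p ω) := by
        funext ω; simp [hb, hε, pmvbSgn]
      rw [this]
      exact ((hasymm p).map_eq).symm
    · have : b p = a p := by funext ω; simp [hb, hε, pmvbSgn]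
      rw [this]
  have h1 : ∫⁻ ω, F (fun p => b p ω) ∂ℙ = ∫⁻ v, F v ∂(Measure.map (fun ω p => b p ω) ℙ) :=
    (lintegral_map hF (measurable_pi_lambda _ fun p => hbm p)).symm
  have h2 : ∫⁻ ω, F (fun p => a p ω) ∂ℙ = ∫⁻ v, F v ∂(Measure.map (fun ω p => a p ω) ℙ) :=
    (lintegral_map hF (measurable_pi_lambda _ fun p => ha p)).symm
  rw [h1, h2, map_pi_of_iIndep b hbm hbindep, map_pi_of_iIndep a ha hindep]
  congr 1
  exact congrArg Measure.pi (funext hbmap)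
lemma avg_lintegral_le {Ω : Type} [MeasureSpace Ω] [IsProbabilityMeasure (ℙ : Measure Ω)]
    {α : Type} [Fintype α] (f : Ω → ENNReal) (g : α → Ω → ENNReal)
    (hg : ∀ e, Measurable (g e))
    (hsym : ∀ e, ∫⁻ ω, g e ω ∂ℙ = ∫⁻ ω, f ω ∂ℙ)
    (B : ENNReal)
    (hpt : ∀ ω, ∑ e, g e ω ≤ (Fintype.card α : ENNReal) * B)
    (hcard : (Fintype.card α : ENNReal) ≠ 0) :
    ∫⁻ ω, f ω ∂ℙ ≤ B := by
  have h1 : (Fintype.card α : ENNReal) * ∫⁻ ω, f ω ∂ℙ = ∫⁻ ω, ∑ e, g e ω ∂ℙ := by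
    rw [lintegral_finset_sum _ (fun e _ => hg e)]
    rw [Finset.sum_congr rfl fun e _ => hsym e, Finset.sum_const, Finset.card_univ, nsmul_eq_mul]
  have h2 : ∫⁻ ω, ∑ e, g e ω ∂ℙ ≤ (Fintype.card α : ENNReal) * B := by
    calc ∫⁻ ω, ∑ e, g e ω ∂ℙ ≤ ∫⁻ _ω, (Fintype.card α : ENNReal) * B ∂ℙ := lintegral_mono hpt
      _ = (Fintype.card α : ENNReal) * B := by rw [lintegral_const, measure_univ, mul_one]
  rw [← ENNReal.mul_le_mul_iff_right hcard (ENNReal.natCast_ne_top _), h1]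
  exact h2

/-- (Lemma 3.2.) For every `K > 0` there is `L = L(K) > 0` with the
following property: if `A = (a_{ij})` is an `N×n` random matrix (`N ≥ n`) with i.i.d.
symmetrically distributed entries of unit variance, and for a fixed unit vector
`y ∈ S^{n-1}` we set `I_y = {i : ∑_j a_{ij}² y_j² ≤ 2}`, then
`P(‖P_{I_y} A y‖ ≥ L √N) ≤ exp(−KN)`. -/
theorem projected_matrix_vector_bound_symmetric :
    ∀ K : ℝ, 0 < K →
      ∃ L : ℝ, 0 < L ∧
        ∀ (N n : ℕ), n ≤ N →
          ∀ (Ω : Type) [MeasureSpace Ω] [IsProbabilityMeasure (ℙ : Measure Ω)]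
            (ξ : Ω → ℝ) (a : Fin N × Fin n → Ω → ℝ),
            Measurable ξ →
            IdentDistrib ξ (fun ω => -ξ ω) ℙ ℙ →
            (∫ ω, (ξ ω) ^ 2 = 1) →
            (∀ p, Measurable (a p)) →
            iIndepFun a ℙ →
            (∀ p, IdentDistrib (a p) ξ ℙ ℙ) →
            ∀ (y : Fin n → ℝ), (∑ j, (y j) ^ 2 = 1) →
              ℙ {ω | L * Real.sqrt N ≤
                    Real.sqrt (∑ i ∈ Finset.univ.filter
                        (fun i : Fin N => ∑ j, (a (i, j) ω) ^ 2 * (y j) ^ 2 ≤ 2),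
                      (∑ j, a (i, j) ω * y j) ^ 2)} ≤
                ENNReal.ofReal (Real.exp (-(K * N))) := by
  intro K hK
  refine ⟨Real.sqrt (8 * (K + 1)), Real.sqrt_pos.2 (by linarith), ?_⟩
  intro N n hnN Ω _ _ ξ a hξ hξsymm hξvar ha hindep haξ y hy
  classical
  have hasymm : ∀ p, IdentDistrib (a p) (fun ω => -(a p ω)) ℙ ℙ := by
    intro p
    have h1 : IdentDistrib (fun ω => -(a p ω)) (fun ω => -(ξ ω)) ℙ ℙ :=
      (haξ p).comp measurable_neg
    exact ((haξ p).trans hξsymm).trans h1.symm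
  set Q : Ω → ℝ := fun ω => ∑ i ∈ Finset.univ.filter
      (fun i : Fin N => ∑ j, (a (i, j) ω) ^ 2 * (y j) ^ 2 ≤ 2),
    (∑ j, a (i, j) ω * y j) ^ 2 with hQdef
  have hQ0 : ∀ ω, 0 ≤ Q ω := fun ω => Finset.sum_nonneg fun i _ => sq_nonneg _
  set F : (Fin N × Fin n → ℝ) → ENNReal := fun c => ENNReal.ofReal (Real.exp
      ((∑ i ∈ Finset.univ.filter
          (fun i : Fin N => ∑ j, (c (i, j)) ^ 2 * (y j) ^ 2 ≤ 2),
        (∑ j, c (i, j) * y j) ^ 2) / 8)) with hFdef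
  have hF : Measurable F := by
    apply ENNReal.measurable_ofReal.comp
    apply Real.measurable_exp.comp
    apply Measurable.div_const
    have : (fun c : Fin N × Fin n → ℝ => ∑ i ∈ Finset.univ.filter
          (fun i : Fin N => ∑ j, (c (i, j)) ^ 2 * (y j) ^ 2 ≤ 2),
        (∑ j, c (i, j) * y j) ^ 2)
        = fun c => ∑ i : Fin N, if (∑ j, (c (i, j)) ^ 2 * (y j) ^ 2 ≤ 2)
            then (∑ j, c (i, j) * y j) ^ 2 else 0 := by
      funext c; rw [Finset.sum_filter]
    rw [this]
    refine Finset.measurable_sum _ fun i _ => Measurable.ite ?_ ?_ measurable_const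
    · refine measurableSet_le (Finset.measurable_sum _ fun j _ => ?_) measurable_const
      exact ((measurable_pi_apply (i, j)).pow_const 2).mul_const _
    · exact (Finset.measurable_sum _ fun j _ =>
        (measurable_pi_apply (i, j)).mul_const _).pow_const 2
  have hFa : ∀ ω, F (fun p => a p ω) = ENNReal.ofReal (Real.exp (Q ω / 8)) := fun ω => rfl
  have hmeasA : Measurable (fun ω => (fun p => a p ω)) :=
    measurable_pi_lambda _ fun p => ha p
  change ℙ {ω | Real.sqrt (8 * (K + 1)) * Real.sqrt N ≤ Real.sqrt (Q ω)}
      ≤ ENNReal.ofReal (Real.exp (-(K * N)))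
  clear_value F Q
  -- Chernoff bound for the exponential moment
  have hkey : ∫⁻ ω, F (fun p => a p ω) ∂ℙ ≤ ENNReal.ofReal (Real.sqrt 2 ^ N) := by
    have hsym : ∀ ε : Fin N × Fin n → Bool,
        ∫⁻ ω, F (fun p => pmvbSgn (ε p) * a p ω) ∂ℙ = ∫⁻ ω, F (fun p => a p ω) ∂ℙ :=
      fun ε => symmetrize_lintegral a ha hindep hasymm F hF ε
    have hcard : (Fintype.card (Fin N × Fin n → Bool)) = 2 ^ (N * n) := by
      simp [Fintype.card_fun]
    have hpt : ∀ ω, ∑ ε : Fin N × Fin n → Bool, F (fun p => pmvbSgn (ε p) * a p ω)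
        ≤ (2 : ENNReal) ^ (N * n) * ENNReal.ofReal (Real.sqrt 2 ^ N) := by
      intro ω
      have hFe : ∀ ε : Fin N × Fin n → Bool, F (fun p => pmvbSgn (ε p) * a p ω)
          = ENNReal.ofReal (Real.exp ((∑ i ∈ Finset.univ.filter
              (fun i : Fin N => ∑ j, ((a (i, j) ω)) ^ 2 * (y j) ^ 2 ≤ 2),
            (∑ j, pmvbSgn (ε (i, j)) * a (i, j) ω * y j) ^ 2) / 8)) := by
        intro ε
        simp only [hFdef]
        have hfil : (Finset.univ.filter (fun i : Fin N =>
              ∑ j, (pmvbSgn (ε (i, j)) * a (i, j) ω) ^ 2 * (y j) ^ 2 ≤ 2))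
            = Finset.univ.filter (fun i : Fin N =>
              ∑ j, (a (i, j) ω) ^ 2 * (y j) ^ 2 ≤ 2) := by
          apply Finset.filter_congr
          intro i _
          rw [Finset.sum_congr rfl fun j _ => by
            rw [mul_pow, pmvbSgn_sq, one_mul]]
        rw [hfil]
      calc ∑ ε : Fin N × Fin n → Bool, F (fun p => pmvbSgn (ε p) * a p ω)
          = ENNReal.ofReal (∑ ε : Fin N × Fin n → Bool, Real.exp ((∑ i ∈ Finset.univ.filter
              (fun i : Fin N => ∑ j, ((a (i, j) ω)) ^ 2 * (y j) ^ 2 ≤ 2),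
            (∑ j, pmvbSgn (ε (i, j)) * a (i, j) ω * y j) ^ 2) / 8)) := by
            rw [ENNReal.ofReal_sum_of_nonneg (fun ε _ => Real.exp_nonneg _)]
            exact Finset.sum_congr rfl fun ε _ => hFe ε
        _ ≤ ENNReal.ofReal (2 ^ (N * n) * Real.sqrt 2 ^ N) :=
            ENNReal.ofReal_le_ofReal (matrix_bound y (fun p => a p ω))
        _ = (2 : ENNReal) ^ (N * n) * ENNReal.ofReal (Real.sqrt 2 ^ N) := by
            rw [ENNReal.ofReal_mul (by positivity), ENNReal.ofReal_pow (by norm_num)]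
            norm_num
    have h2pow : ((2 : ENNReal) ^ (N * n)) ≠ 0 := by positivity
    have h2powtop : ((2 : ENNReal) ^ (N * n)) ≠ ⊤ := by
      exact ENNReal.pow_ne_top (by norm_num)
    have hcard2 : ((Fintype.card (Fin N × Fin n → Bool)) : ENNReal) = (2 : ENNReal) ^ (N * n) := by
      rw [hcard]; push_cast; rfl
    refine avg_lintegral_le (α := Fin N × Fin n → Bool) (fun ω => F (fun p => a p ω))
      (fun ε ω => F (fun p => pmvbSgn (ε p) * a p ω))
      (fun (ε : Fin N × Fin n → Bool) =>
        hF.comp (measurable_pi_lambda _ fun p => (ha p).const_mul _))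
      hsym (ENNReal.ofReal (Real.sqrt 2 ^ N)) (fun ω => ?_) ?_
    · rw [hcard2]; exact hpt ω
    · rw [hcard2]; positivity
  -- Markov / Chebyshev step
  set ε0 : ENNReal := ENNReal.ofReal (Real.exp ((K + 1) * N)) with hε0
  have hsubset : {ω | Real.sqrt (8 * (K + 1)) * Real.sqrt N ≤ Real.sqrt (Q ω)}
      ⊆ {ω | ε0 ≤ F (fun p => a p ω)} := by
    intro ω hω
    simp only [Set.mem_setOf_eq] at hω ⊢
    rw [hFa ω, hε0]
    apply ENNReal.ofReal_le_ofReal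
    apply Real.exp_le_exp.2
    have h1 : (Real.sqrt (8 * (K + 1)) * Real.sqrt N) ^ 2 ≤ Real.sqrt (Q ω) ^ 2 :=
      pow_le_pow_left₀ (by positivity) hω 2
    rw [Real.sq_sqrt (hQ0 ω), mul_pow, Real.sq_sqrt (by positivity : (0:ℝ) ≤ 8 * (K + 1)),
      Real.sq_sqrt (Nat.cast_nonneg N)] at h1
    linarith
  have hmarkov := mul_meas_ge_le_lintegral₀ (μ := ℙ)
    ((hF.comp hmeasA).aemeasurable) ε0
  have hε0pos : ε0 ≠ 0 := by
    simp [hε0, Real.exp_pos]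
  have hε0top : ε0 ≠ ⊤ := ENNReal.ofReal_ne_top
  have hfinal : ℙ {ω | Real.sqrt (8 * (K + 1)) * Real.sqrt N ≤ Real.sqrt (Q ω)}
      ≤ ENNReal.ofReal (Real.sqrt 2 ^ N) / ε0 := by
    rw [ENNReal.le_div_iff_mul_le (Or.inl hε0pos) (Or.inl hε0top)]
    calc ℙ {ω | Real.sqrt (8 * (K + 1)) * Real.sqrt N ≤ Real.sqrt (Q ω)} * ε0
        ≤ ℙ {ω | ε0 ≤ F (fun p => a p ω)} * ε0 :=
          mul_le_mul_left (measure_mono hsubset) ε0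
      _ = ε0 * ℙ {ω | ε0 ≤ F (fun p => a p ω)} := mul_comm _ _
      _ ≤ ∫⁻ ω, F (fun p => a p ω) ∂ℙ := hmarkov
      _ ≤ ENNReal.ofReal (Real.sqrt 2 ^ N) := hkey
  refine hfinal.trans ?_
  rw [hε0, ← ENNReal.ofReal_div_of_pos (Real.exp_pos _)]
  apply ENNReal.ofReal_le_ofReal
  have hs2 : Real.sqrt 2 ≤ Real.exp 1 := by
    have h1 : Real.sqrt 2 ≤ 2 := by
      nlinarith [Real.sq_sqrt (show (0:ℝ) ≤ 2 by norm_num), Real.sqrt_nonneg 2]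
    have h2 : (2:ℝ) ≤ Real.exp 1 := by
      have := Real.add_one_le_exp 1; linarith
    linarith
  have hpow : Real.sqrt 2 ^ N ≤ Real.exp 1 ^ N :=
    pow_le_pow_left₀ (Real.sqrt_nonneg 2) hs2 N
  rw [← Real.exp_nat_mul] at hpow
  rw [div_le_iff₀ (Real.exp_pos _), ← Real.exp_add]
  refine hpow.trans (Real.exp_le_exp.2 ?_)
  push_cast
  ring_nf
  nlinarith [Nat.cast_nonneg (α := ℝ) N]
end PMVBAux
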